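/- Let p = 4m+1 be prime. Then the Legendre symbol of the product of central binomial coefficients P_m = ∏_{r=0}^{2m} binom(2m, r) satisfies (P_m / p) = (−1)^m. In particular P_m is not divisible by p. -/
import Mathlib


open BigOperators Finset

lemma fact_sq_eq_neg_one (m p : ℕ) (hpm : p = 4 * m + 1) [Fact p.Prime] :
    ((2 * m).factorial : ZMod p) ^ 2 = -1 := by
  have key : ((2 * m).factorial * Nat.descFactorial (p - 1) (2 * m) : ZMod p) = -1 := by
    have h := Nat.factorial_mul_descFactorial (n := p - 1) (k := 2 * m) (by omega)
    have : ((p - 1 - 2 * m).factorial * Nat.descFactorial (p - 1) (2 * m) : ZMod p)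
        = ((p - 1).factorial : ZMod p) := by exact_mod_cast congrArg (Nat.cast : ℕ → ZMod p) h
    rw [ZMod.wilsons_lemma] at this
    have h2 : p - 1 - 2 * m = 2 * m := by omega
    rwa [h2] at this
  rw [ZMod.cast_descFactorial (by omega)] at key
  rw [sq]
  calc ((2 * m).factorial : ZMod p) * (2 * m).factorial
      = (2 * m).factorial * ((-1) ^ (2 * m) * (2 * m).factorial) := by
        rw [pow_mul]; ring_nf
    _ = -1 := key

theorem stmt_17 (m : ℕ) (p : ℕ) (hpm : p = 4 * m + 1) [Fact p.Prime] :
    legendreSym p (∏ r ∈ Finset.range (2 * m + 1), (Nat.choose (2 * m) r : ℤ))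
        = (-1 : ℤ) ^ m ∧
    ¬ ((p : ℤ) ∣ ∏ r ∈ Finset.range (2 * m + 1), (Nat.choose (2 * m) r : ℤ)) := by
  have hp : p.Prime := Fact.out
  have hm : 1 ≤ m := by
    by_contra h
    have : m = 0 := by omega
    subst this
    simp at hpm
    exact absurd (hpm ▸ hp) Nat.not_prime_one
  set P : ℤ := ∏ r ∈ Finset.range (2 * m + 1), (Nat.choose (2 * m) r : ℤ) with hP
  set Q : ZMod p := ∏ r ∈ Finset.range (2 * m + 1), ((Nat.factorial r : ℕ) : ZMod p) with hQ
  have hF2 : ((2 * m).factorial : ZMod p) ^ 2 = -1 := fact_sq_eq_neg_one m p hpm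
  -- key identity: P * Q^2 = (2m)!^(2m+1) in ZMod p
  have hkey : (P : ZMod p) * Q ^ 2 = ((2 * m).factorial : ZMod p) ^ (2 * m + 1) := by
    have hnat : (∏ r ∈ Finset.range (2 * m + 1), Nat.choose (2 * m) r)
        * (∏ r ∈ Finset.range (2 * m + 1), Nat.factorial r)
        * (∏ r ∈ Finset.range (2 * m + 1), Nat.factorial r)
        = (2 * m).factorial ^ (2 * m + 1) := by
      have hrefl : (∏ r ∈ Finset.range (2 * m + 1), Nat.factorial r)
          = ∏ r ∈ Finset.range (2 * m + 1), Nat.factorial (2 * m - r) := by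
        rw [← Finset.prod_range_reflect]
        apply Finset.prod_congr rfl
        intro x _
        rfl
      nth_rw 2 [hrefl]
      rw [← Finset.prod_mul_distrib, ← Finset.prod_mul_distrib]
      calc ∏ x ∈ Finset.range (2 * m + 1),
            Nat.choose (2 * m) x * Nat.factorial x * Nat.factorial (2 * m - x)
          = ∏ _x ∈ Finset.range (2 * m + 1), (2 * m).factorial := by
            apply Finset.prod_congr rfl
            intro r hr
            rw [Finset.mem_range] at hr
            exact Nat.choose_mul_factorial_mul_factorial (by omega)
        _ = (2 * m).factorial ^ (2 * m + 1) := by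
            rw [Finset.prod_const, Finset.card_range]
    have : ((∏ r ∈ Finset.range (2 * m + 1), Nat.choose (2 * m) r : ℕ) : ZMod p)
        * ((∏ r ∈ Finset.range (2 * m + 1), Nat.factorial r : ℕ) : ZMod p)
        * ((∏ r ∈ Finset.range (2 * m + 1), Nat.factorial r : ℕ) : ZMod p)
        = ((2 * m).factorial : ZMod p) ^ (2 * m + 1) := by
      exact_mod_cast congrArg (Nat.cast : ℕ → ZMod p) hnat
    rw [hP]
    push_cast
    push_cast at this
    rw [hQ]
    linear_combination this
  have hQne : Q ≠ 0 := by
    rw [hQ]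
    apply Finset.prod_ne_zero_iff.mpr
    intro r hr
    rw [Finset.mem_range] at hr
    rw [Ne, ZMod.natCast_eq_zero_iff]
    intro hdvd
    have := (Nat.Prime.dvd_factorial hp).mp hdvd
    omega
  -- P^(2m) = (-1)^m in ZMod p
  have hpow : (P : ZMod p) ^ (2 * m) = (-1 : ZMod p) ^ m := by
    have h1 : ((P : ZMod p) * Q ^ 2) ^ (2 * m)
        = (((2 * m).factorial : ZMod p) ^ 2) ^ ((2 * m + 1) * m) := by
      rw [hkey, ← pow_mul]
      ring_nf
    rw [hF2] at h1
    have hQ1 : Q ^ (2 * m * 2) = 1 := by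
      have : Q ^ (p - 1) = 1 := ZMod.pow_card_sub_one_eq_one hQne
      have hp1 : p - 1 = 2 * m * 2 := by omega
      rwa [hp1] at this
    have h2 : ((P : ZMod p) * Q ^ 2) ^ (2 * m) = (P : ZMod p) ^ (2 * m) * Q ^ (2 * m * 2) := by
      rw [mul_pow, ← pow_mul]
      ring_nf
    rw [h2, hQ1, mul_one] at h1
    rw [h1]
    have : (-1 : ZMod p) ^ ((2 * m + 1) * m) = (-1) ^ m := by
      rw [show (2 * m + 1) * m = m + 2 * (m * m) by ring, pow_add, pow_mul]
      simp
    rw [this]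
  have hPne : (P : ZMod p) ≠ 0 := by
    intro h0
    rw [h0] at hpow
    have : ((-1 : ZMod p)) ^ m ≠ 0 := by
      apply pow_ne_zero
      simp only [ne_eq, neg_eq_zero]
      exact one_ne_zero
    rw [zero_pow (by omega)] at hpow
    exact this hpow.symm
  have hcast : ((legendreSym p P : ℤ) : ZMod p) = (((-1 : ℤ) ^ m : ℤ) : ZMod p) := by
    rw [legendreSym.eq_pow]
    have : p / 2 = 2 * m := by omega
    rw [this, hpow]
    push_cast
    ring
  have hne : ((1 : ZMod p)) ≠ -1 := by
    intro h
    have h2 : (2 : ZMod p) = 0 := by linear_combination h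
    rw [show (2 : ZMod p) = ((2 : ℕ) : ZMod p) by norm_num,
      ZMod.natCast_eq_zero_iff] at h2
    have := Nat.le_of_dvd (by norm_num) h2
    omega
  have hleg := legendreSym.eq_one_or_neg_one p hPne
  have hLeq : legendreSym p P = (-1 : ℤ) ^ m := by
    rcases hleg with h1 | h1 <;> rcases Nat.even_or_odd m with hm2 | hm2
    · rw [h1, hm2.neg_one_pow]
    · exfalso
      rw [h1, hm2.neg_one_pow] at hcast
      push_cast at hcast
      exact hne hcast
    · exfalso
      rw [h1, hm2.neg_one_pow] at hcast
      push_cast at hcast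
      exact hne hcast.symm
    · rw [h1, hm2.neg_one_pow]
  refine ⟨hLeq, ?_⟩
  intro hdvd
  rw [← ZMod.intCast_zmod_eq_zero_iff_dvd] at hdvd
  exact hPne hdvd
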